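/- Let R be a unique factorization domain of finite character with Krull dimension 2. Then every prime ideal of R is radically perfect. -/

import Mathlib

/-- The height of an ideal `I`: the infimum of the heights (in the prime spectrum)
of the prime ideals containing `I`. -/
noncomputable def idealHeight (R : Type*) [CommRing R] (I : Ideal R) : ℕ∞ :=
  ⨅ P : {P : PrimeSpectrum R // I ≤ P.asIdeal}, Order.height P.1

/-- An ideal `I` is radically perfect if its height equals the least number `n` such that
`√I` is the radical of an ideal generated by `n` elements, and moreover, if `ht I = 0`,
then `√I` is the radical of a principal ideal generated by a zero divisor. -/
def RadicallyPerfect {R : Type*} [CommRing R] (I : Ideal R) : Prop :=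
  idealHeight R I = sInf {n : ℕ∞ | ∃ s : Finset R,
      (s.card : ℕ∞) = n ∧ (Ideal.span (s : Set R)).radical = I.radical} ∧
    (idealHeight R I = 0 → ∃ θ : R, θ ∉ nonZeroDivisors R ∧
      I.radical = (Ideal.span {θ} : Ideal R).radical)

/-- The set of ideals of `R` generated by `ht P` elements whose radical equals `P`. -/
def genHtRad {R : Type*} [CommRing R] (P : Ideal R) : Set (Ideal R) :=
  {A | ∃ s : Finset R, (s.card : ℕ∞) = idealHeight R P ∧
    Ideal.span (s : Set R) = A ∧ A.radical = P}

/-- A commutative ring `R` is radically finite if every prime ideal `P` of `R` is radically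
perfect, the set of ideals generated by `ht P` elements with radical `P` has a maximal
member `A`, and every chain of ideals between `A` and `P` is finite. -/
def RadicallyFinite (R : Type*) [CommRing R] : Prop :=
  ∀ P : Ideal R, P.IsPrime → RadicallyPerfect P ∧
    ∃ A ∈ genHtRad P, (∀ B ∈ genHtRad P, A ≤ B → B = A) ∧
      ∀ C : Set (Ideal R), IsChain (· ≤ ·) C → C ⊆ Set.Icc A P → C.Finite

/-- A ring is of finite character if each nonzero element lies in only finitely many
maximal ideals. -/
def FiniteCharacter (R : Type*) [CommRing R] : Prop :=
  ∀ x : R, x ≠ 0 → {M : Ideal R | M.IsMaximal ∧ x ∈ M}.Finite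


section Helpers

variable {R : Type*} [CommRing R] [IsDomain R]

set_option maxHeartbeats 1000000 in
lemma myIdealHeight_eq_height (P : Ideal R) (hP : P.IsPrime) :
    (⨅ Q : {Q : PrimeSpectrum R // P ≤ Q.asIdeal}, Order.height Q.1)
      = Order.height (⟨P, hP⟩ : PrimeSpectrum R) := by
  apply le_antisymm
  · exact iInf_le (fun Q : {Q : PrimeSpectrum R // P ≤ Q.asIdeal} => Order.height Q.1)
      ⟨⟨P, hP⟩, le_rfl⟩
  · exact le_iInf fun Q => Order.height_mono ((PrimeSpectrum.asIdeal_le_asIdeal _ _).mp Q.2)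

lemma myHeight_zero_iff_bot (x : PrimeSpectrum R) :
    Order.height x = 0 ↔ x.asIdeal = ⊥ := by
  rw [Order.height_eq_zero]
  constructor
  · intro h
    have hb : (⟨⊥, Ideal.bot_prime⟩ : PrimeSpectrum R) ≤ x :=
      (PrimeSpectrum.asIdeal_le_asIdeal _ _).mp bot_le
    exact le_bot_iff.mp ((PrimeSpectrum.asIdeal_le_asIdeal _ _).mpr (h hb))
  · intro h y hyx
    exact (PrimeSpectrum.asIdeal_le_asIdeal _ _).mp (h ▸ bot_le)

lemma myEq_span_of_height_le_one [UniqueFactorizationMonoid R] {q : R} (hq : Prime q)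
    (Q : PrimeSpectrum R) (hle : Order.height Q ≤ 1) (hmem : q ∈ Q.asIdeal) :
    Q.asIdeal = Ideal.span {q} := by
  set qp : PrimeSpectrum R := ⟨Ideal.span {q}, (Ideal.span_singleton_prime hq.ne_zero).mpr hq⟩
  have hle' : qp ≤ Q :=
    (PrimeSpectrum.asIdeal_le_asIdeal _ _).mp ((Ideal.span_singleton_le_iff_mem _).mpr hmem)
  rcases eq_or_lt_of_le hle' with h | h
  · rw [← h]
  · exfalso
    have hfin : Order.height qp < ⊤ :=
      lt_of_le_of_lt ((Order.height_mono hle').trans hle)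
        (by exact_mod_cast WithTop.coe_lt_top (1 : ℕ))
    have hlt := Order.height_strictMono h hfin
    have h0 : Order.height qp = 0 := ENat.lt_one_iff_eq_zero.mp (lt_of_lt_of_le hlt hle)
    have := (myHeight_zero_iff_bot qp).mp h0
    exact hq.ne_zero (Ideal.span_singleton_eq_bot.mp this)

lemma myNot_le_span_of_height_two [UniqueFactorizationMonoid R] (P : PrimeSpectrum R)
    (hht : Order.height P = 2) {q : R} (hq : Prime q) :
    ¬ (P.asIdeal ≤ Ideal.span {q}) := by
  intro hle
  obtain ⟨p, hlast, hlen⟩ := Order.exists_series_of_height_eq_coe P hht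
  replace hlen : p.length = 2 := by exact_mod_cast hlen
  set Q := p.eraseLast.last with hQdef
  have h12 : Q < P := by
    rw [← hlast]
    exact p.eraseLast_last_rel_last (by omega)
  have h01 : p.eraseLast.eraseLast.last < Q :=
    p.eraseLast.eraseLast_last_rel_last (by simp [RelSeries.eraseLast_length]; omega)
  have hQbot : Q.asIdeal ≠ ⊥ := by
    intro h
    have hq2 : Q ≤ p.eraseLast.eraseLast.last :=
      (PrimeSpectrum.asIdeal_le_asIdeal _ _).mp (by rw [h]; exact bot_le)
    exact absurd hq2 (not_le_of_gt h01)
  obtain ⟨q', hq'mem, hq'⟩ := Q.isPrime.exists_mem_prime_of_ne_bot hQbot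
  have hq'span : q' ∈ Ideal.span {q} :=
    hle (((PrimeSpectrum.asIdeal_le_asIdeal _ _).mpr h12.le) hq'mem)
  obtain ⟨c, hc⟩ := Ideal.mem_span_singleton.mp hq'span
  rcases hq'.irreducible.isUnit_or_isUnit hc with h | h
  · exact hq.not_unit h
  · obtain ⟨u, rfl⟩ := h
    have hqQ : q ∈ Q.asIdeal := by
      have hq2 : q = q' * (↑u⁻¹ : Rˣ) := by
        rw [hc, mul_assoc, Units.mul_inv, mul_one]
      rw [hq2]
      exact Q.asIdeal.mul_mem_right _ hq'mem
    have : P ≤ Q :=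
      (PrimeSpectrum.asIdeal_le_asIdeal _ _).mp
        (hle.trans ((Ideal.span_singleton_le_iff_mem _).mpr hqQ))
    exact absurd this (not_le_of_gt h12)

lemma myHeight_two_isMaximal (hle2 : ∀ x : PrimeSpectrum R, Order.height x ≤ 2)
    (Q : PrimeSpectrum R) (h2 : Order.height Q = 2) : Q.asIdeal.IsMaximal := by
  obtain ⟨M, hM, hQM⟩ := Q.asIdeal.exists_le_maximal Q.isPrime.ne_top
  have heq : Q.asIdeal = M := by
    by_contra hne
    have hlt : Q < (⟨M, hM.isPrime⟩ : PrimeSpectrum R) :=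
      lt_of_le_of_ne ((PrimeSpectrum.asIdeal_le_asIdeal _ _).mp hQM)
        (fun h => hne (congrArg PrimeSpectrum.asIdeal h))
    have := Order.height_strictMono hlt
      (by rw [h2]; exact_mod_cast WithTop.coe_lt_top (2 : ℕ))
    rw [h2] at this
    exact absurd (hle2 _) (not_le.mpr this)
  exact heq ▸ hM

end Helpers

/-- Every prime ideal of a UFD of finite character with Krull dimension 2 is
radically perfect. -/
theorem ufd_finiteCharacter_dim_two_radicallyPerfect {R : Type*} [CommRing R]
    [IsDomain R] [UniqueFactorizationMonoid R] (hfc : FiniteCharacter R)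
    (hdim : ringKrullDim R = 2) (P : Ideal R) (hP : P.IsPrime) :
    RadicallyPerfect P := by
  classical
  set pS : PrimeSpectrum R := ⟨P, hP⟩ with hpS
  have hIH : idealHeight R P = Order.height pS := myIdealHeight_eq_height P hP
  have hle2 : ∀ x : PrimeSpectrum R, Order.height x ≤ 2 := by
    intro x
    have h := Order.height_le_krullDim x
    rw [show Order.krullDim (PrimeSpectrum R) = ringKrullDim R from rfl, hdim] at h
    exact WithBot.coe_le_coe.mp (h.trans_eq (by rfl : (2 : WithBot ℕ∞) = ((2:ℕ∞) : WithBot ℕ∞)))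
  have hfin : Order.height pS ≠ ⊤ := fun h => by
    have := hle2 pS; rw [h] at this; exact absurd this (by simp)
  obtain ⟨n, hn0⟩ := WithTop.ne_top_iff_exists.mp hfin
  have hn : (n : ℕ∞) = Order.height pS := by exact_mod_cast hn0
  have hn2 : n ≤ 2 := by
    have := hle2 pS; rw [← hn] at this; exact_mod_cast this
  have hradP : P.radical = P := hP.radical
  -- helper: 0 in the set iff P = ⊥
  have hzero_mem : ∀ s : Finset R, (s.card : ℕ∞) = 0 →
      (Ideal.span (s : Set R)).radical = P.radical → P = ⊥ := by
    intro s hcard hrad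
    have : s = ∅ := Finset.card_eq_zero.mp (by exact_mod_cast hcard)
    subst this
    rw [Finset.coe_empty, Ideal.span_empty, Ideal.radical_bot_of_noZeroDivisors, hradP] at hrad
    exact hrad.symm
  interval_cases n
  · -- height 0 : P = ⊥
    have hbot : P = ⊥ := (myHeight_zero_iff_bot pS).mp (by exact_mod_cast hn.symm)
    constructor
    · rw [hIH, ← hn]
      have hmem : (0 : ℕ∞) ∈ {n : ℕ∞ | ∃ s : Finset R,
          (s.card : ℕ∞) = n ∧ (Ideal.span (s : Set R)).radical = P.radical} := by
        refine ⟨∅, by simp, ?_⟩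
        rw [Finset.coe_empty, Ideal.span_empty, Ideal.radical_bot_of_noZeroDivisors, hradP, hbot]
      exact_mod_cast le_antisymm zero_le (sInf_le hmem)
    · intro _
      refine ⟨0, zero_notMem_nonZeroDivisors, ?_⟩
      rw [hbot, Ideal.span_singleton_eq_bot.mpr rfl]
  · -- height 1 : P is principal generated by a prime
    have hht : Order.height pS = 1 := by exact_mod_cast hn.symm
    have hPbot : P ≠ ⊥ := by
      intro h
      rw [(myHeight_zero_iff_bot pS).mpr h] at hht
      exact absurd hht (by norm_num)
    obtain ⟨q, hqP, hq⟩ := hP.exists_mem_prime_of_ne_bot hPbot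
    have hPeq : P = Ideal.span {q} := myEq_span_of_height_le_one hq pS (le_of_eq hht) hqP
    constructor
    · rw [hIH, hht]
      apply le_antisymm
      · apply le_sInf
        rintro m ⟨s, hcard, hrad⟩
        rw [ENat.one_le_iff_ne_zero]
        intro h0
        exact hPbot (hzero_mem s (h0 ▸ hcard) hrad)
      · exact sInf_le ⟨{q}, by simp, by rw [Finset.coe_singleton, ← hPeq]⟩
    · intro h
      rw [hIH, hht] at h
      exact absurd h (by norm_num)
  · -- height 2
    have hht : Order.height pS = 2 := by exact_mod_cast hn.symm
    have hPbot : P ≠ ⊥ := by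
      intro h
      rw [(myHeight_zero_iff_bot pS).mpr h] at hht
      exact absurd hht (by norm_num)
    obtain ⟨q, hqP, hq⟩ := hP.exists_mem_prime_of_ne_bot hPbot
    have hfinM := hfc q hq.ne_zero
    set T : Finset (Ideal R) := insert (Ideal.span {q}) (hfinM.toFinset.erase P) with hT
    have hprime : ∀ i ∈ T, i.IsPrime := by
      intro i hi
      rcases Finset.mem_insert.mp hi with rfl | hi'
      · exact (Ideal.span_singleton_prime hq.ne_zero).mpr hq
      · exact ((hfinM.mem_toFinset).mp (Finset.mem_of_mem_erase hi')).1.isPrime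
    have hnotle : ∀ i ∈ T, ¬ P ≤ i := by
      intro i hi hle
      rcases Finset.mem_insert.mp hi with rfl | hi'
      · exact myNot_le_span_of_height_two pS hht hq hle
      · have hne := Finset.ne_of_mem_erase hi'
        have hiM : i.IsMaximal := ((hfinM.mem_toFinset).mp (Finset.mem_of_mem_erase hi')).1
        have hlt : pS < (⟨i, hiM.isPrime⟩ : PrimeSpectrum R) :=
          lt_of_le_of_ne ((PrimeSpectrum.asIdeal_le_asIdeal _ _).mp hle)
            (fun h => hne (congrArg PrimeSpectrum.asIdeal h).symm)
        have hsm := Order.height_strictMono hlt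
          (by rw [hht]; exact_mod_cast WithTop.coe_lt_top (2 : ℕ))
        rw [hht] at hsm
        exact absurd (hle2 _) (not_le.mpr hsm)
    have hsub : ¬ ((P : Set R) ⊆ ⋃ i ∈ (T : Set (Ideal R)), (i : Set R)) := by
      rw [Ideal.subset_union_prime (Ideal.span {q}) (Ideal.span {q})
        (fun i hi _ _ => hprime i hi)]
      rintro ⟨i, hi, hle⟩
      exact hnotle i hi hle
    obtain ⟨b, hbP, hbU⟩ := Set.not_subset.mp hsub
    have hbP' : b ∈ P := hbP
    have hbq : b ∉ Ideal.span {q} := fun h => hbU <| Set.mem_biUnion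
      (Finset.mem_coe.mpr (Finset.mem_insert_self _ _)) h
    have hbM : ∀ M ∈ hfinM.toFinset.erase P, b ∉ M := fun M hM h => hbU <| Set.mem_biUnion
      (Finset.mem_coe.mpr (Finset.mem_insert_of_mem hM)) h
    have hqb : q ≠ b := fun h => hbq (h ▸ Ideal.subset_span rfl)
    -- key radical identity
    have key : (Ideal.span ({q, b} : Set R)).radical = P := by
      rw [Ideal.radical_eq_sInf]
      apply le_antisymm
      · exact sInf_le ⟨Ideal.span_le.mpr (by
          rintro x (rfl | rfl)
          · exact hqP
          · exact hbP'), hP⟩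
      · apply le_sInf
        rintro J ⟨hJle, hJ⟩
        have hsub' : ({q, b} : Set R) ⊆ J := Ideal.span_le.mp hJle
        have hqJ : q ∈ J := hsub' (Set.mem_insert _ _)
        have hbJ : b ∈ J := hsub' (Set.mem_insert_of_mem _ rfl)
        set Jp : PrimeSpectrum R := ⟨J, hJ⟩ with hJp
        rcases le_or_gt (Order.height Jp) 1 with h | h
        · have hJeq : J = Ideal.span {q} := myEq_span_of_height_le_one hq Jp h hqJ
          exact absurd (hJeq ▸ hbJ) hbq
        · have h2 : Order.height Jp = 2 := by
            have hle' := hle2 Jp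
            refine le_antisymm hle' ?_
            rw [show (2:ℕ∞) = 1 + 1 by norm_num]
            exact Order.add_one_le_of_lt h
          have hJmax : J.IsMaximal := myHeight_two_isMaximal hle2 Jp h2
          have hJmem : J ∈ hfinM.toFinset := (hfinM.mem_toFinset).mpr ⟨hJmax, hqJ⟩
          by_cases hJP : J = P
          · exact le_of_eq hJP.symm
          · exact absurd hbJ (hbM J (Finset.mem_erase.mpr ⟨hJP, hJmem⟩))
    constructor
    · rw [hIH, hht]
      apply le_antisymm
      · apply le_sInf
        rintro m ⟨s, hcard, hrad⟩
        rw [← hcard]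
        have hcard2 : 2 ≤ s.card := by
          by_contra hlt
          push_neg at hlt
          interval_cases hc : s.card
          · exact hPbot (hzero_mem s (by exact_mod_cast hc) hrad)
          · obtain ⟨θ, rfl⟩ := Finset.card_eq_one.mp hc
            rw [Finset.coe_singleton] at hrad
            have hθ0 : θ ≠ 0 := by
              rintro rfl
              rw [Ideal.span_singleton_eq_bot.mpr rfl,
                Ideal.radical_bot_of_noZeroDivisors, hradP] at hrad
              exact hPbot hrad.symm
            have hθu : ¬ IsUnit θ := by
              intro hu
              rw [Ideal.span_singleton_eq_top.mpr hu, Ideal.radical_top, hradP] at hrad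
              exact hP.ne_top hrad.symm
            obtain ⟨f, hf, hfd⟩ := WfDvdMonoid.exists_irreducible_factor hθu hθ0
            have hfp : Prime f := UniqueFactorizationMonoid.irreducible_iff_prime.mp hf
            have hle' : Ideal.span {θ} ≤ Ideal.span {f} :=
              (Ideal.span_singleton_le_span_singleton).mpr hfd
            have hPle : P ≤ Ideal.span {f} := by
              calc P = P.radical := hradP.symm
                _ = (Ideal.span {θ}).radical := hrad.symm
                _ ≤ (Ideal.span {f}).radical := Ideal.radical_mono hle'
                _ = Ideal.span {f} :=
                    ((Ideal.span_singleton_prime hfp.ne_zero).mpr hfp).radical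
            exact myNot_le_span_of_height_two pS hht hfp hPle
        exact_mod_cast hcard2
      · refine sInf_le ⟨({q, b} : Finset R), ?_, ?_⟩
        · rw [Finset.card_pair hqb]; norm_cast
        · rw [show ((({q, b} : Finset R) : Set R)) = ({q, b} : Set R) by simp, key, hradP]
    · intro h
      rw [hIH, hht] at h
      exact absurd h (by norm_num)
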